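/- Let X be a complex topological vector space, Γ a set of continuous linear operators on X, and T a continuous linear operator on X with dense range that commutes with every element of Γ (i.e., T S = S T for all S ∈ Γ). Then for every diskcyclic vector x of Γ, the vector T x is also a diskcyclic vector of Γ. -/

import Mathlib

/-- If `T` is a continuous linear operator with dense range commuting with every element
of `Γ`, then `T` maps diskcyclic vectors of `Γ` to diskcyclic vectors of `Γ`. -/
theorem stmt_1 {X : Type*} [AddCommGroup X] [Module ℂ X] [TopologicalSpace X]
    [IsTopologicalAddGroup X] [ContinuousSMul ℂ X]
    (Γ : Set (X →L[ℂ] X)) (T : X →L[ℂ] X) (hT : DenseRange ⇑T)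
    (hcomm : ∀ S ∈ Γ, T ∘L S = S ∘L T) (x : X)
    (hx : Dense {y : X | ∃ α : ℂ, ‖α‖ ≤ 1 ∧ ∃ S ∈ Γ, y = α • S x}) :
    Dense {y : X | ∃ α : ℂ, ‖α‖ ≤ 1 ∧ ∃ S ∈ Γ, y = α • S (T x)} := by
  have h := hT.dense_image T.continuous hx
  refine h.mono ?_
  rintro _ ⟨y, ⟨α, hα, S, hS, rfl⟩, rfl⟩
  refine ⟨α, hα, S, hS, ?_⟩
  have := congrArg (fun f : X →L[ℂ] X => f x) (hcomm S hS)
  simp only [ContinuousLinearMap.coe_comp', Function.comp_apply] at this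
  simp [map_smul, this]
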